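/- Let I=(A,B,≻,q) be a school matching instance and define, for stable matchings M,M', M ≥ M' iff M(a) ⪰_a M'(a) for every student a∈A. Then (S(I),≥) is a lattice: for M,M'∈S(I), the matching that pairs every student a with the more preferred (w.r.t. ≻_a) of M(a) and M'(a), and pairs every school having strictly fewer than q_b student partners also with ∅, is stable and is the join M∨M'; the matching that pairs every student with the less preferred of M(a) and M'(a) (schools with fewer than q_b student partners also paired with ∅) is stable and is the meet M∧M'. -/

import Mathlib

open Classical
open scoped ENNReal

noncomputable section

namespace SM

/-- A school matching instance: students `A`, schools `B`, strict preference
orders over the other side plus the outside option `∅` (encoded as `none`),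
and quotas `q b ≤ |A|`. -/
structure SchoolInstance (A B : Type) [Fintype A] [Fintype B] where
  prefA : A → Option B → Option B → Prop
  prefB : B → Option A → Option A → Prop
  prefA_sto : ∀ a, IsStrictTotalOrder (Option B) (prefA a)
  prefB_sto : ∀ b, IsStrictTotalOrder (Option A) (prefB b)
  q : B → ℕ
  q_le : ∀ b, q b ≤ Fintype.card A

variable {A B : Type} [Fintype A] [Fintype B] [DecidableEq A] [DecidableEq B]

/-- A matching: every student is assigned a school or the outside option, and
each school receives at most `q b` students.  (A school is implicitly paired
with the outside option exactly when it has strictly fewer than `q b`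
students, and a student is paired with the outside option exactly when it has
no school; this determines the set of pairs of the matching.) -/
structure Matching {A B : Type} [Fintype A] [Fintype B] (I : SchoolInstance A B) where
  toFun : A → Option B
  quota : ∀ b : B, (Finset.univ.filter fun a => toFun a = some b).card ≤ I.q b

instance (I : SchoolInstance A B) : Nonempty (Matching I) := by
  refine ⟨⟨fun _ => none, fun b => ?_⟩⟩
  have h : (Finset.univ.filter fun _ : A => (none : Option B) = some b) = ∅ :=
    Finset.filter_false_of_mem (by intro a _; simp)
  rw [h, Finset.card_empty]
  exact Nat.zero_le _

/-- The students assigned to school `b`. -/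
def assignedTo (I : SchoolInstance A B) (M : Matching I) (b : B) : Finset A :=
  Finset.univ.filter fun a => M.toFun a = some b

/-- School `b` has strictly fewer than `q b` students, i.e. is also paired
with the outside option. -/
def hasSlack (I : SchoolInstance A B) (M : Matching I) (b : B) : Prop :=
  (assignedTo I M b).card < I.q b

/-- `x ∈ M(b)`: the partners of school `b` (students assigned to it, plus the
outside option when it is under quota). -/
def inPartners (I : SchoolInstance A B) (M : Matching I) (b : B) (x : Option A) : Prop :=
  (∃ a : A, x = some a ∧ M.toFun a = some b) ∨ (x = none ∧ hasSlack I M b)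

/-- `M(b)` as a set. -/
def partnersSet (I : SchoolInstance A B) (M : Matching I) (b : B) : Set (Option A) :=
  {x | inPartners I M b x}

/-- The pair `ab` blocks `M`. -/
def BlocksPair (I : SchoolInstance A B) (M : Matching I) (a : A) (b : B) : Prop :=
  I.prefA a (some b) (M.toFun a) ∧ ∃ x, inPartners I M b x ∧ I.prefB b (some a) x

/-- Student `a` blocks `M` (prefers the outside option to its partner). -/
def BlocksStudent (I : SchoolInstance A B) (M : Matching I) (a : A) : Prop :=
  I.prefA a none (M.toFun a)

/-- School `b` blocks `M` (prefers the outside option to one of its partners). -/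
def BlocksSchool (I : SchoolInstance A B) (M : Matching I) (b : B) : Prop :=
  ∃ a : A, M.toFun a = some b ∧ I.prefB b none (some a)

/-- Stability: no blocking pair and no blocking agent. -/
def Stable (I : SchoolInstance A B) (M : Matching I) : Prop :=
  (¬ ∃ a b, BlocksPair I M a b) ∧ (¬ ∃ a, BlocksStudent I M a) ∧ (¬ ∃ b, BlocksSchool I M b)

/-- `M ≥ M'`: every student weakly prefers `M` to `M'`. -/
def matGE (I : SchoolInstance A B) (M M' : Matching I) : Prop :=
  ∀ a : A, M.toFun a = M'.toFun a ∨ I.prefA a (M.toFun a) (M'.toFun a)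

/-- `M' < M` in the student order. -/
def matLT (I : SchoolInstance A B) (M' M : Matching I) : Prop :=
  matGE I M M' ∧ M'.toFun ≠ M.toFun

/-- `M'` is an immediate predecessor of `M` in `(S(I), ≥)`. -/
def ImmPred (I : SchoolInstance A B) (M' M : Matching I) : Prop :=
  Stable I M' ∧ Stable I M ∧ matLT I M' M ∧
    ¬ ∃ M'' : Matching I, Stable I M'' ∧ matLT I M' M'' ∧ matLT I M'' M

/-- The type in which rotations live: pairs `(ρ₊, ρ₋)` of sets of
student/school pairs (with the outside option allowed on either side). -/
abbrev Rot (A B : Type) : Type :=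
  Finset (Option A × Option B) × Finset (Option A × Option B)

/-- The set of pairs of a matching: each student with its partner, and each
under-quota school with the outside option. -/
def pairsOf (I : SchoolInstance A B) (M : Matching I) : Finset (Option A × Option B) :=
  Finset.univ.filter fun p =>
    (∃ a : A, p = (some a, M.toFun a)) ∨ (∃ b : B, hasSlack I M b ∧ p = (none, some b))

/-- The rotation `ρ(M, M') = (M ∖ M', M' ∖ M)`. -/
def rho (I : SchoolInstance A B) (M M' : Matching I) : Rot A B :=
  (pairsOf I M \ pairsOf I M', pairsOf I M' \ pairsOf I M)

/-- `R(I)`: the set of all rotations of `I`. -/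
def RotSet (I : SchoolInstance A B) : Set (Rot A B) :=
  {r | ∃ M M' : Matching I, ImmPred I M' M ∧ r = rho I M M'}

/-- `c` is a maximal chain of stable matchings from `M0` down to `M`:
consecutive entries are immediate predecessors. -/
def chainTo (I : SchoolInstance A B) (M0 M : Matching I) (c : List (Matching I)) : Prop :=
  c.head? = some M0 ∧ c.getLast? = some M ∧ (∀ N ∈ c, Stable I N) ∧
    List.Chain' (fun X Y => ImmPred I Y X) c

/-- The set of rotations eliminated along the chain `c`. -/
def chainRots (I : SchoolInstance A B) (c : List (Matching I)) : Set (Rot A B) :=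
  {r | ∃ (i : ℕ) (X Y : Matching I), getElem? c i = some X ∧ getElem? c (i + 1) = some Y ∧ r = rho I X Y}

/-- `ρ` is exposed in `M`. -/
def Exposed (I : SchoolInstance A B) (r : Rot A B) (M : Matching I) : Prop :=
  ∃ M', ImmPred I M' M ∧ r = rho I M M'

/-- The rotation poset `ρ ⊵ ρ'` (relative to the rotation-set map `RM`):
either `ρ = ρ'`, or `ρ ∈ R_M` for every stable `M` in which `ρ'` is exposed. -/
def domRel (I : SchoolInstance A B) (RM : Matching I → Set (Rot A B)) (r r' : Rot A B) : Prop :=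
  r = r' ∨ ∀ M, Stable I M → Exposed I r' M → r ∈ RM M

/-- `ρ ▷ ρ'`. -/
def strictDom (I : SchoolInstance A B) (RM : Matching I → Set (Rot A B)) (r r' : Rot A B) : Prop :=
  domRel I RM r r' ∧ r ≠ r'

/-- `R ⊆ R(I)` is upper-closed in the rotation poset. -/
def UpperClosed (I : SchoolInstance A B) (RM : Matching I → Set (Rot A B))
    (R : Set (Rot A B)) : Prop :=
  R ⊆ RotSet I ∧ ∀ r' ∈ R, ∀ r ∈ RotSet I, domRel I RM r r' → r ∈ R

/-- `N` is the join `M ∨ M'` (least upper bound) in `(S(I), ≥)`. -/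
def IsJoin (I : SchoolInstance A B) (M M' N : Matching I) : Prop :=
  Stable I N ∧ matGE I N M ∧ matGE I N M' ∧
    ∀ P, Stable I P → matGE I P M → matGE I P M' → matGE I P N

/-- `N` is the meet `M ∧ M'` (greatest lower bound) in `(S(I), ≥)`. -/
def IsMeet (I : SchoolInstance A B) (M M' N : Matching I) : Prop :=
  Stable I N ∧ matGE I M N ∧ matGE I M' N ∧
    ∀ P, Stable I P → matGE I M P → matGE I M' P → matGE I N P

/-- `F` is a (nonempty) sublattice of the lattice of stable matchings. -/
def IsSublattice (I : SchoolInstance A B) (F : Set (Matching I)) : Prop :=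
  F.Nonempty ∧ (∀ M ∈ F, Stable I M) ∧
    (∀ M ∈ F, ∀ M' ∈ F, ∃ N ∈ F, IsJoin I M M' N) ∧
    (∀ M ∈ F, ∀ M' ∈ F, ∃ N ∈ F, IsMeet I M M' N)

/-- `ρ ~ ρ'`: the two rotations are eliminated together in every matching of `F`. -/
def rotEquiv (I : SchoolInstance A B) (RM : Matching I → Set (Rot A B))
    (F : Set (Matching I)) (r r' : Rot A B) : Prop :=
  ∀ M ∈ F, (r ∈ RM M ↔ r' ∈ RM M)

/-- The trivial meta-rotation `θ₀^F` of rotations eliminated in every matching of `F`. -/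
def theta0 (I : SchoolInstance A B) (RM : Matching I → Set (Rot A B))
    (F : Set (Matching I)) : Set (Rot A B) :=
  {r | r ∈ RotSet I ∧ ∀ M ∈ F, r ∈ RM M}

/-- The trivial meta-rotation `θ_z^F` of rotations eliminated in no matching of `F`. -/
def thetaZ (I : SchoolInstance A B) (RM : Matching I → Set (Rot A B))
    (F : Set (Matching I)) : Set (Rot A B) :=
  {r | r ∈ RotSet I ∧ ∀ M ∈ F, r ∉ RM M}

/-- `θ` is a meta-rotation of `F` (an equivalence class of `~`). -/
def IsMetaRot (I : SchoolInstance A B) (RM : Matching I → Set (Rot A B))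
    (F : Set (Matching I)) (θ : Set (Rot A B)) : Prop :=
  ∃ r ∈ RotSet I, θ = {r' | r' ∈ RotSet I ∧ rotEquiv I RM F r r'}

/-- `θ` is a proper meta-rotation of `F`. -/
def IsProperMeta (I : SchoolInstance A B) (RM : Matching I → Set (Rot A B))
    (F : Set (Matching I)) (θ : Set (Rot A B)) : Prop :=
  IsMetaRot I RM F θ ∧ θ ≠ theta0 I RM F ∧ θ ≠ thetaZ I RM F

/-- `θ ⊵^F θ'` on (proper) meta-rotations. -/
def metaDom (I : SchoolInstance A B) (RM : Matching I → Set (Rot A B))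
    (F : Set (Matching I)) (θ θ' : Set (Rot A B)) : Prop :=
  ∀ M ∈ F, θ' ⊆ RM M → θ ⊆ RM M

/-- `Θ_M`: the set of proper meta-rotations contained in `R_M`. -/
def ThetaM (I : SchoolInstance A B) (RM : Matching I → Set (Rot A B))
    (F : Set (Matching I)) (M : Matching I) : Set (Set (Rot A B)) :=
  {θ | IsProperMeta I RM F θ ∧ θ ⊆ RM M}

/-- `Θ` is an upper-closed set of proper meta-rotations. -/
def UCProper (I : SchoolInstance A B) (RM : Matching I → Set (Rot A B))
    (F : Set (Matching I)) (Θ : Set (Set (Rot A B))) : Prop :=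
  (∀ θ ∈ Θ, IsProperMeta I RM F θ) ∧
    ∀ θ' ∈ Θ, ∀ θ, IsProperMeta I RM F θ → metaDom I RM F θ θ' → θ ∈ Θ

/-- `M_R`: the stable matching whose rotation set is `R` (via definite description). -/
def MofR (I : SchoolInstance A B) (RM : Matching I → Set (Rot A B))
    (R : Set (Rot A B)) : Matching I :=
  Classical.epsilon fun M => Stable I M ∧ RM M = R

/-- `R^θ = θ₀^F ∪ ⋃ {θ' proper : θ' ⊵^F θ}`. -/
def Rup (I : SchoolInstance A B) (RM : Matching I → Set (Rot A B))
    (F : Set (Matching I)) (θ : Set (Rot A B)) : Set (Rot A B) :=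
  theta0 I RM F ∪ ⋃₀ {θ' | IsProperMeta I RM F θ' ∧ metaDom I RM F θ' θ}

/-- `R_θ = θ₀^F ∪ ⋃ {θ' proper : θ' ▷^F θ}`. -/
def Rdn (I : SchoolInstance A B) (RM : Matching I → Set (Rot A B))
    (F : Set (Matching I)) (θ : Set (Rot A B)) : Set (Rot A B) :=
  theta0 I RM F ∪ ⋃₀ {θ' | IsProperMeta I RM F θ' ∧ metaDom I RM F θ' θ ∧ θ' ≠ θ}

/-- `M^θ`. -/
def Mup (I : SchoolInstance A B) (RM : Matching I → Set (Rot A B))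
    (F : Set (Matching I)) (θ : Set (Rot A B)) : Matching I :=
  MofR I RM (Rup I RM F θ)

/-- `M_θ`. -/
def Mdn (I : SchoolInstance A B) (RM : Matching I → Set (Rot A B))
    (F : Set (Matching I)) (θ : Set (Rot A B)) : Matching I :=
  MofR I RM (Rdn I RM F θ)

/-- The meet `M ∧ M'` in the lattice of stable matchings (via definite description). -/
def meetM (I : SchoolInstance A B) (M M' : Matching I) : Matching I :=
  Classical.epsilon fun N => IsMeet I M M' N

/-- First order differential `∂f_θ = f(M^θ) − f(M_θ)`. -/
def d1 (I : SchoolInstance A B) (RM : Matching I → Set (Rot A B))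
    (F : Set (Matching I)) (f : Matching I → ℝ) (θ : Set (Rot A B)) : ℝ :=
  f (Mup I RM F θ) - f (Mdn I RM F θ)

/-- Second order differential
`∂²f_{θ,θ'} = f(M^θ ∧ M_{θ'}) + f(M_θ ∧ M^{θ'}) − f(M_θ ∧ M_{θ'}) − f(M^θ ∧ M^{θ'})`. -/
def d2 (I : SchoolInstance A B) (RM : Matching I → Set (Rot A B))
    (F : Set (Matching I)) (f : Matching I → ℝ) (θ θ' : Set (Rot A B)) : ℝ :=
  f (meetM I (Mup I RM F θ) (Mdn I RM F θ')) + f (meetM I (Mdn I RM F θ) (Mup I RM F θ'))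
    - f (meetM I (Mdn I RM F θ) (Mdn I RM F θ')) - f (meetM I (Mup I RM F θ) (Mup I RM F θ'))

/-- The greatest element `M₀^F` of `F` (via definite description). -/
def topF (I : SchoolInstance A B) (F : Set (Matching I)) : Matching I :=
  Classical.epsilon fun N => N ∈ F ∧ ∀ P ∈ F, matGE I N P

/-- Vertices of the digraph: all rotations, plus a source `s` and sink `t`. -/
abbrev Vtx (A B : Type) : Type := Rot A B ⊕ Bool

/-- The source `s`. -/
def srcV : Vtx A B := Sum.inr true

/-- The sink `t`. -/
def tgtV : Vtx A B := Sum.inr false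

/-- The value of the cut `S` for the capacity function `u`: the total capacity
of the arcs leaving `S`. -/
def cutVal (u : Vtx A B → Vtx A B → ℝ≥0∞) (S : Set (Vtx A B)) : ℝ≥0∞ :=
  ∑ p : Vtx A B × Vtx A B, if p.1 ∈ S ∧ p.2 ∉ S then u p.1 p.2 else 0

/-- The `s`-`t` cut `{s} ∪ R`. -/
def cutOf (R : Set (Rot A B)) : Set (Vtx A B) := insert srcV (Sum.inl '' R)

/-- `(u, C)` witnesses minimum cut representability of `Π(f, F)`: for every
`R ⊆ R(I)`, the cut `{s} ∪ R` has finite capacity iff `R` is upper-closed and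
`M_R ∈ F`, and in that case its value is `f(M_R) + C`. -/
def MinCutRepWith (I : SchoolInstance A B) (RM : Matching I → Set (Rot A B))
    (F : Set (Matching I)) (f : Matching I → ℝ)
    (u : Vtx A B → Vtx A B → ℝ≥0∞) (C : ℝ) : Prop :=
  ∀ R : Set (Rot A B), R ⊆ RotSet I →
    ((cutVal u (cutOf R) ≠ ⊤ ↔
        (UpperClosed I RM R ∧ ∃ M, Stable I M ∧ RM M = R ∧ M ∈ F)) ∧
      (∀ M, Stable I M → RM M = R → M ∈ F → (cutVal u (cutOf R)).toReal = f M + C))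

/-- The problem `Π(f, F)` is minimum cut representable. -/
def MinCutRep (I : SchoolInstance A B) (RM : Matching I → Set (Rot A B))
    (F : Set (Matching I)) (f : Matching I → ℝ) : Prop :=
  ∃ u C, MinCutRepWith I RM F f u C

/-- The cut digraph `D^{f,F}` (with representative rotations `rep` and
constant `γ`); capacities of parallel arcs are added. -/
def cutDigraph (I : SchoolInstance A B) (RM : Matching I → Set (Rot A B))
    (F : Set (Matching I)) (f : Matching I → ℝ)
    (rep : Set (Rot A B) → Rot A B) (γ : ℝ) : Vtx A B → Vtx A B → ℝ≥0∞ :=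
  fun x y =>
    (if ∃ θ, IsMetaRot I RM F θ ∧ ∃ r ∈ θ, ∃ r' ∈ θ, r ≠ r' ∧ x = Sum.inl r ∧ y = Sum.inl r'
      then ⊤ else 0)
    + (if ∃ θ θ', IsProperMeta I RM F θ ∧ IsProperMeta I RM F θ' ∧ θ ≠ θ' ∧
          metaDom I RM F θ' θ ∧ x = Sum.inl (rep θ) ∧ y = Sum.inl (rep θ')
        then ⊤ else 0)
    + (∑ θ : Set (Rot A B), ∑ θ' : Set (Rot A B),
        if IsProperMeta I RM F θ ∧ IsProperMeta I RM F θ' ∧ θ ≠ θ' ∧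
            x = Sum.inl (rep θ) ∧ y = Sum.inl (rep θ')
        then ENNReal.ofReal ((1 / 2) * d2 I RM F f θ θ') else 0)
    + (if (theta0 I RM F).Nonempty ∧ x = srcV ∧ y = Sum.inl (rep (theta0 I RM F))
        then ⊤ else 0)
    + (if (thetaZ I RM F).Nonempty ∧ x = Sum.inl (rep (thetaZ I RM F)) ∧ y = tgtV
        then ⊤ else 0)
    + (∑ θ : Set (Rot A B),
        if IsProperMeta I RM F θ ∧ x = Sum.inl (rep θ) ∧ y = tgtV
        then ENNReal.ofReal (d1 I RM F f θ -
          (1 / 2) * (∑ θ' : Set (Rot A B),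
            if IsProperMeta I RM F θ' ∧ θ' ≠ θ then d2 I RM F f θ θ' else 0) + γ)
        else 0)
    + (∑ θ : Set (Rot A B),
        if IsProperMeta I RM F θ ∧ x = srcV ∧ y = Sum.inl (rep θ)
        then ENNReal.ofReal γ else 0)

/-- `b` prefers `S'` to `S''`: every member of `S'` is preferred to every
member of `S'' ∖ S'`. -/
def prefersSet (I : SchoolInstance A B) (b : B) (S' S'' : Set (Option A)) : Prop :=
  ∀ x ∈ S', ∀ y ∈ S'', y ∉ S' → I.prefB b x y

/-- `A(ρ)`: students appearing in `ρ₊`. -/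
def Aof (r : Rot A B) : Set A := {a | ∃ b : B, (some a, some b) ∈ r.1}

/-- `B(ρ)`: schools appearing in `ρ₊`. -/
def Bof (r : Rot A B) : Set B := {b | ∃ a : A, (some a, some b) ∈ r.1}

/-- `ρ₊(b)`: students matched to `b` in `ρ₊`. -/
def rhoPlusB (r : Rot A B) (b : B) : Set A := {a | (some a, some b) ∈ r.1}

/-- `R^ρ = {ρ' : ρ' ⊵ ρ}`. -/
def RupRot (I : SchoolInstance A B) (RM : Matching I → Set (Rot A B))
    (r : Rot A B) : Set (Rot A B) :=
  {r' | r' ∈ RotSet I ∧ domRel I RM r' r}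

/-- `R_ρ = {ρ' : ρ' ▷ ρ}`. -/
def RdnRot (I : SchoolInstance A B) (RM : Matching I → Set (Rot A B))
    (r : Rot A B) : Set (Rot A B) :=
  {r' | r' ∈ RotSet I ∧ strictDom I RM r' r}

/-- `M^ρ`. -/
def MupRot (I : SchoolInstance A B) (RM : Matching I → Set (Rot A B))
    (r : Rot A B) : Matching I :=
  MofR I RM (RupRot I RM r)

/-- `M_ρ`. -/
def MdnRot (I : SchoolInstance A B) (RM : Matching I → Set (Rot A B))
    (r : Rot A B) : Matching I :=
  MofR I RM (RdnRot I RM r)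

/-- First order differential of `f` at a rotation: `∂f_ρ = f(M^ρ) − f(M_ρ)`. -/
def d1Rot (I : SchoolInstance A B) (RM : Matching I → Set (Rot A B))
    (f : Matching I → ℝ) (r : Rot A B) : ℝ :=
  f (MupRot I RM r) - f (MdnRot I RM r)

/-- Second order differential of `f` at a pair of distinct rotations. -/
def d2Rot (I : SchoolInstance A B) (RM : Matching I → Set (Rot A B))
    (f : Matching I → ℝ) (r r' : Rot A B) : ℝ :=
  f (meetM I (MupRot I RM r) (MdnRot I RM r')) + f (meetM I (MdnRot I RM r) (MupRot I RM r'))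
    - f (meetM I (MdnRot I RM r) (MdnRot I RM r'))
    - f (meetM I (MupRot I RM r) (MupRot I RM r'))

/-- The pair `(ρ_in, ρ_out)` characterizes the stable matchings assigning both
siblings `a, ā` to school `b`. -/
def siblingChar (I : SchoolInstance A B) (RM : Matching I → Set (Rot A B))
    (a abar : A) (b : B) (p : Rot A B × Rot A B) : Prop :=
  ∀ M : Matching I, Stable I M →
    ((M.toFun a = some b ∧ M.toFun abar = some b) ↔ (p.1 ∈ RM M ∧ p.2 ∉ RM M))

/-- Some stable matching assigns both `a` and `ā` to `b`. -/
def goodSchool (I : SchoolInstance A B) (a abar : A) (b : B) : Prop :=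
  ∃ M, Stable I M ∧ M.toFun a = some b ∧ M.toFun abar = some b

/-- The pair `(ρ_in(a,ā,b), ρ_out(a,ā,b))` (via definite description). -/
def siblingPair (I : SchoolInstance A B) (RM : Matching I → Set (Rot A B))
    (a abar : A) (b : B) : Rot A B × Rot A B :=
  Classical.epsilon fun p => p.1 ∈ RotSet I ∧ p.2 ∈ RotSet I ∧
    siblingChar I RM a abar b p ∧ strictDom I RM p.1 p.2

/-- `R_in(a, ā)`. -/
def Rin (I : SchoolInstance A B) (RM : Matching I → Set (Rot A B))
    (a abar : A) : Set (Rot A B) :=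
  {r | ∃ b, goodSchool I a abar b ∧ r = (siblingPair I RM a abar b).1}

/-- `R_out(a, ā)`. -/
def Rout (I : SchoolInstance A B) (RM : Matching I → Set (Rot A B))
    (a abar : A) : Set (Rot A B) :=
  {r | ∃ b, goodSchool I a abar b ∧ r = (siblingPair I RM a abar b).2}

/-- The indicator function: `0` when the siblings are matched to the same
school, `1` otherwise. -/
def sibIndicator (I : SchoolInstance A B) (a abar : A) : Matching I → ℝ :=
  fun M => if M.toFun a = M.toFun abar then 0 else 1

end SM

namespace SM

variable {A B : Type} [Fintype A] [Fintype B] [DecidableEq A] [DecidableEq B]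

section LatticeAux

variable (I : SchoolInstance A B)

lemma At {a : A} {x y z : Option B} (h1 : I.prefA a x y) (h2 : I.prefA a y z) :
    I.prefA a x z :=
  (I.prefA_sto a).toIsStrictOrder.toIsTrans.trans x y z h1 h2

lemma Airr {a : A} {x : Option B} (h : I.prefA a x x) : False :=
  (I.prefA_sto a).toIsStrictOrder.toIrrefl.irrefl x h

lemma Aasym {a : A} {x y : Option B} (h1 : I.prefA a x y) (h2 : I.prefA a y x) : False :=
  Airr I (At I h1 h2)

lemma Atri (a : A) (x y : Option B) : I.prefA a x y ∨ x = y ∨ I.prefA a y x :=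
  (I.prefA_sto a).toTrichotomous.rel_or_eq_or_rel_swap (a := x) (b := y)

lemma Bt {b : B} {x y z : Option A} (h1 : I.prefB b x y) (h2 : I.prefB b y z) :
    I.prefB b x z :=
  (I.prefB_sto b).toIsStrictOrder.toIsTrans.trans x y z h1 h2

lemma Birr {b : B} {x : Option A} (h : I.prefB b x x) : False :=
  (I.prefB_sto b).toIsStrictOrder.toIrrefl.irrefl x h

lemma Basym {b : B} {x y : Option A} (h1 : I.prefB b x y) (h2 : I.prefB b y x) : False :=
  Birr I (Bt I h1 h2)

lemma Btri (b : B) (x y : Option A) : I.prefB b x y ∨ x = y ∨ I.prefB b y x :=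
  (I.prefB_sto b).toTrichotomous.rel_or_eq_or_rel_swap (a := x) (b := y)

variable {I}

lemma school_pos {M : Matching I} (hM : Stable I M) {a : A} {b : B}
    (h : M.toFun a = some b) : I.prefB b (some a) none := by
  rcases Btri I b (some a) none with h1 | h1 | h1
  · exact h1
  · exact absurd h1 (by simp)
  · exact absurd ⟨b, a, h, h1⟩ hM.2.2

lemma quota_amb (M : Matching I) (b : B) :
    (Finset.univ.filter fun a => M.toFun a = some b).card ≤ I.q b := by
  have h := M.quota b
  rwa [Finset.filter_congr_decidable] at h

/-- Key stability consequence: if `a` is matched to `b` in stable `N` and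
strictly prefers `b` to its partner in stable `M`, then every partner of `b`
in `M` is preferred by `b` to `a`. -/
lemma gain_dom {M N : Matching I} (hM : Stable I M) (hN : Stable I N) {a : A} {b : B}
    (hb : N.toFun a = some b) (hp : I.prefA a (some b) (M.toFun a)) :
    ∀ x, inPartners I M b x → I.prefB b x (some a) := by
  have hMa : M.toFun a ≠ some b := fun h => Airr I (h ▸ hp)
  intro x hx
  have hnb : ¬ I.prefB b (some a) x := fun hpb => hM.1 ⟨a, b, hp, x, hx, hpb⟩
  rcases hx with ⟨c, rfl, hc⟩ | ⟨rfl, _⟩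
  · rcases Btri I b (some a) (some c) with h1 | h1 | h1
    · exact (hnb h1).elim
    · exact absurd ((Option.some_inj.mp h1).symm ▸ hc) hMa
    · exact h1
  · exact (hnb (school_pos hN hb)).elim

lemma gain_full {M N : Matching I} (hM : Stable I M) (hN : Stable I N) {a : A} {b : B}
    (hb : N.toFun a = some b) (hp : I.prefA a (some b) (M.toFun a)) :
    ¬ hasSlack I M b :=
  fun hs => Basym I (gain_dom hM hN hb hp none (Or.inr ⟨rfl, hs⟩)) (school_pos hN hb)

/-- The pointwise-max (join) assignment. -/
noncomputable def jf (M M' : Matching I) : A → Option B := fun a =>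
  if I.prefA a (M.toFun a) (M'.toFun a) then M.toFun a else M'.toFun a

/-- The pointwise-min (meet) assignment. -/
noncomputable def mf (M M' : Matching I) : A → Option B := fun a =>
  if I.prefA a (M.toFun a) (M'.toFun a) then M'.toFun a else M.toFun a

lemma jf_or (M M' : Matching I) (a : A) :
    jf M M' a = M.toFun a ∨ (jf M M' a = M'.toFun a ∧ I.prefA a (jf M M' a) (M.toFun a)) := by
  unfold jf
  by_cases h : I.prefA a (M.toFun a) (M'.toFun a)
  · rw [if_pos h]; exact Or.inl rfl
  · rw [if_neg h]
    rcases Atri I a (M.toFun a) (M'.toFun a) with h1 | h1 | h1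
    · exact absurd h1 h
    · exact Or.inl h1.symm
    · exact Or.inr ⟨rfl, h1⟩

lemma jf_or' (M M' : Matching I) (a : A) :
    jf M M' a = M'.toFun a ∨ (jf M M' a = M.toFun a ∧ I.prefA a (jf M M' a) (M'.toFun a)) := by
  unfold jf
  by_cases h : I.prefA a (M.toFun a) (M'.toFun a)
  · rw [if_pos h]; exact Or.inr ⟨rfl, h⟩
  · rw [if_neg h]; exact Or.inl rfl

lemma jf_mem (M M' : Matching I) (a : A) :
    jf M M' a = M.toFun a ∨ jf M M' a = M'.toFun a := by
  unfold jf
  by_cases h : I.prefA a (M.toFun a) (M'.toFun a)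
  · rw [if_pos h]; exact Or.inl rfl
  · rw [if_neg h]; exact Or.inr rfl

lemma mf_mem (M M' : Matching I) (a : A) :
    mf M M' a = M.toFun a ∨ mf M M' a = M'.toFun a := by
  unfold mf
  by_cases h : I.prefA a (M.toFun a) (M'.toFun a)
  · rw [if_pos h]; exact Or.inr rfl
  · rw [if_neg h]; exact Or.inl rfl

lemma mf_le (M M' : Matching I) (a : A) :
    M.toFun a = mf M M' a ∨ I.prefA a (M.toFun a) (mf M M' a) := by
  unfold mf
  by_cases h : I.prefA a (M.toFun a) (M'.toFun a)
  · rw [if_pos h]; exact Or.inr h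
  · rw [if_neg h]; exact Or.inl rfl

lemma mf_le' (M M' : Matching I) (a : A) :
    M'.toFun a = mf M M' a ∨ I.prefA a (M'.toFun a) (mf M M' a) := by
  unfold mf
  by_cases h : I.prefA a (M.toFun a) (M'.toFun a)
  · rw [if_pos h]; exact Or.inl rfl
  · rw [if_neg h]
    rcases Atri I a (M'.toFun a) (M.toFun a) with h1 | h1 | h1
    · exact Or.inr h1
    · exact Or.inl h1
    · exact absurd h1 h

/-- Quota for the join, via the dichotomy lemma. -/
lemma join_quota {M M' : Matching I} (hM : Stable I M) (hM' : Stable I M') :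
    ∀ b : B, (Finset.univ.filter fun a => jf M M' a = some b).card ≤ I.q b := by
  intro b
  by_cases hsub : (Finset.univ.filter fun a => jf M M' a = some b) ⊆
      (Finset.univ.filter fun a => M.toFun a = some b)
  · exact le_trans (Finset.card_le_card hsub) (quota_amb M b)
  · obtain ⟨a2, ha2S, ha2X⟩ := Finset.not_subset.mp hsub
    have ha2j : jf M M' a2 = some b := (Finset.mem_filter.mp ha2S).2
    have ha2M : M.toFun a2 ≠ some b := by
      intro h; exact ha2X (Finset.mem_filter.mpr ⟨Finset.mem_univ _, h⟩)
    have ha2 : M'.toFun a2 = some b ∧ I.prefA a2 (some b) (M.toFun a2) := by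
      rcases jf_or M M' a2 with h | ⟨h1, h2⟩
      · exact absurd (h ▸ ha2j) ha2M
      · exact ⟨h1 ▸ ha2j, ha2j ▸ h2⟩
    have hsub' : (Finset.univ.filter fun a => jf M M' a = some b) ⊆
        (Finset.univ.filter fun a => M'.toFun a = some b) := by
      intro c hc
      have hcj : jf M M' c = some b := (Finset.mem_filter.mp hc).2
      by_contra hcY
      have hcM' : M'.toFun c ≠ some b := by
        intro h; exact hcY (Finset.mem_filter.mpr ⟨Finset.mem_univ _, h⟩)
      have hc2 : M.toFun c = some b ∧ I.prefA c (some b) (M'.toFun c) := by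
        rcases jf_or' M M' c with h | ⟨h1, h2⟩
        · exact absurd (h ▸ hcj) hcM'
        · exact ⟨h1 ▸ hcj, hcj ▸ h2⟩
      -- two opposite gainers at b: contradiction
      have hd1 : I.prefB b (some a2) (some c) :=
        gain_dom hM' hM hc2.1 hc2.2 (some a2) (Or.inl ⟨a2, rfl, ha2.1⟩)
      have hd2 : I.prefB b (some c) (some a2) :=
        gain_dom hM hM' ha2.1 ha2.2 (some c) (Or.inl ⟨c, rfl, hc2.1⟩)
      exact Basym I hd1 hd2
    exact le_trans (Finset.card_le_card hsub') (quota_amb M' b)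

/-- Counting lemma: any "improving" quota-respecting assignment fills each
school exactly as much as `M` does. -/
lemma count_eq {M M' : Matching I} (hM : Stable I M) (hM' : Stable I M')
    (f : A → Option B)
    (hq : ∀ b : B, (Finset.univ.filter fun a => f a = some b).card ≤ I.q b)
    (hf : ∀ a, f a = M.toFun a ∨ (f a = M'.toFun a ∧ I.prefA a (f a) (M.toFun a))) :
    ∀ b : B, (Finset.univ.filter fun a => f a = some b).card = (assignedTo I M b).card := by
  classical
  set S : B → Finset A := fun b => Finset.univ.filter fun a => f a = some b with hSdef
  set X : B → Finset A := fun b => Finset.univ.filter fun a => M.toFun a = some b with hXdef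
  have hXcard : ∀ b, (X b).card ≤ I.q b := fun b => quota_amb M b
  have key1 : ∀ b : B, ∀ a ∈ S b \ X b, I.q b ≤ (X b).card := by
    intro b a ha
    rw [Finset.mem_sdiff] at ha
    have hfa : f a = some b := (Finset.mem_filter.mp ha.1).2
    have hMa : M.toFun a ≠ some b := by
      intro h; exact ha.2 (Finset.mem_filter.mpr ⟨Finset.mem_univ _, h⟩)
    rcases hf a with h | ⟨h1, h2⟩
    · exact absurd (h ▸ hfa) hMa
    · have hfull : ¬ hasSlack I M b :=
        gain_full hM hM' (h1 ▸ hfa : M'.toFun a = some b) (hfa ▸ h2)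
      exact Nat.le_of_not_lt hfull
  have key2 : ∀ b : B, (S b \ X b).card ≤ (X b \ S b).card := by
    intro b
    rcases (S b \ X b).eq_empty_or_nonempty with h | ⟨a, ha⟩
    · simp [h]
    · have hfull := key1 b a ha
      have h1 : (S b).card ≤ I.q b := hq b
      have e1 : (S b ∩ X b).card + (S b \ X b).card = (S b).card :=
        Finset.card_inter_add_card_sdiff _ _
      have e2 : (X b ∩ S b).card + (X b \ S b).card = (X b).card :=
        Finset.card_inter_add_card_sdiff _ _
      rw [Finset.inter_comm] at e2
      have := hXcard b
      omega
  have hdisjX : ∀ x ∈ (Finset.univ : Finset B), ∀ y ∈ (Finset.univ : Finset B),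
      x ≠ y → Disjoint (X x \ S x) (X y \ S y) := by
    intro x _ y _ hxy
    rw [Finset.disjoint_left]
    intro a ha ha'
    have h1 : M.toFun a = some x := (Finset.mem_filter.mp (Finset.mem_sdiff.mp ha).1).2
    have h2 : M.toFun a = some y := (Finset.mem_filter.mp (Finset.mem_sdiff.mp ha').1).2
    exact hxy (by rw [h1] at h2; exact Option.some_inj.mp h2)
  have hdisjS : ∀ x ∈ (Finset.univ : Finset B), ∀ y ∈ (Finset.univ : Finset B),
      x ≠ y → Disjoint (S x \ X x) (S y \ X y) := by
    intro x _ y _ hxy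
    rw [Finset.disjoint_left]
    intro a ha ha'
    have h1 : f a = some x := (Finset.mem_filter.mp (Finset.mem_sdiff.mp ha).1).2
    have h2 : f a = some y := (Finset.mem_filter.mp (Finset.mem_sdiff.mp ha').1).2
    exact hxy (by rw [h1] at h2; exact Option.some_inj.mp h2)
  have hsubU : (Finset.univ.biUnion fun b => X b \ S b) ⊆
      (Finset.univ.biUnion fun b => S b \ X b) := by
    intro a ha
    rw [Finset.mem_biUnion] at ha
    obtain ⟨b, _, hab⟩ := ha
    rw [Finset.mem_sdiff] at hab
    have hMa : M.toFun a = some b := (Finset.mem_filter.mp hab.1).2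
    have hfa : f a ≠ some b := by
      intro h; exact hab.2 (Finset.mem_filter.mpr ⟨Finset.mem_univ _, h⟩)
    have hfm : f a = M'.toFun a ∧ I.prefA a (f a) (M.toFun a) := by
      rcases hf a with h | h
      · exact absurd (h.trans hMa) hfa
      · exact h
    cases hfo : f a with
    | none =>
      exact absurd ⟨a, show I.prefA a none (M.toFun a) from hfo ▸ hfm.2⟩ hM.2.1
    | some b' =>
      rw [Finset.mem_biUnion]
      refine ⟨b', Finset.mem_univ _, Finset.mem_sdiff.mpr ⟨Finset.mem_filter.mpr
        ⟨Finset.mem_univ _, hfo⟩, ?_⟩⟩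
      intro hmem
      have : M.toFun a = some b' := (Finset.mem_filter.mp hmem).2
      rw [hMa] at this
      exact hfa (hfo.trans this.symm)
  have hsum1 : (∑ b : B, (X b \ S b).card) ≤ (∑ b : B, (S b \ X b).card) := by
    rw [← Finset.card_biUnion hdisjX, ← Finset.card_biUnion hdisjS]
    exact Finset.card_le_card hsubU
  have hsum2 : (∑ b : B, (S b \ X b).card) ≤ (∑ b : B, (X b \ S b).card) :=
    Finset.sum_le_sum fun b _ => key2 b
  have heq : ∀ b ∈ (Finset.univ : Finset B), (S b \ X b).card = (X b \ S b).card :=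
    (Finset.sum_eq_sum_iff_of_le (fun b _ => key2 b)).mp (le_antisymm hsum2 hsum1)
  intro b
  have e1 : (S b ∩ X b).card + (S b \ X b).card = (S b).card :=
    Finset.card_inter_add_card_sdiff _ _
  have e2 : (X b ∩ S b).card + (X b \ S b).card = (X b).card :=
    Finset.card_inter_add_card_sdiff _ _
  rw [Finset.inter_comm] at e2
  have := heq b (Finset.mem_univ b)
  show (S b).card = (X b).card
  omega

lemma card_sum_id (M M' : Matching I) (b : B) :
    (Finset.univ.filter fun a => jf M M' a = some b).card
      + (Finset.univ.filter fun a => mf M M' a = some b).card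
    = (assignedTo I M b).card + (assignedTo I M' b).card := by
  classical
  simp only [assignedTo, Finset.card_filter]
  rw [← Finset.sum_add_distrib, ← Finset.sum_add_distrib]
  apply Finset.sum_congr rfl
  intro a _
  unfold jf mf
  by_cases h : I.prefA a (M.toFun a) (M'.toFun a)
  · rw [if_pos h, if_pos h]
  · rw [if_neg h, if_neg h]; exact Nat.add_comm _ _

/-- The key contradiction for the meet's stability (hard case). -/
lemma meet_aux {M M' : Matching I} (hM : Stable I M) (hM' : Stable I M')
    (μf : A → Option B) {a a' : A} {b : B}
    (hq : (Finset.univ.filter fun c => μf c = some b).card ≤ I.q b)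
    (hmin : ∀ c, M.toFun c = some b → I.prefA c (M'.toFun c) (some b) → μf c = some b)
    (hboth : ∀ c, M.toFun c = some b → M'.toFun c = some b → μf c = some b)
    (ha : I.prefA a (some b) (M.toFun a))
    (ha' : M'.toFun a' = some b) (ha'2 : M.toFun a' ≠ some b)
    (hμa' : μf a' = some b)
    (hab : I.prefB b (some a) (some a')) : False := by
  have hapos : I.prefB b (some a) none := Bt I hab (school_pos hM' ha')
  have hnb : ∀ x, inPartners I M b x → ¬ I.prefB b (some a) x :=
    fun x hx hp => hM.1 ⟨a, b, ha, x, hx, hp⟩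
  have hfull : ¬ hasSlack I M b := fun hs => hnb none (Or.inr ⟨rfl, hs⟩) hapos
  have hMa : M.toFun a ≠ some b := fun h => Airr I (h ▸ ha)
  have hdom : ∀ c, M.toFun c = some b → I.prefB b (some c) (some a) := by
    intro c hc
    have h1 := hnb (some c) (Or.inl ⟨c, rfl, hc⟩)
    rcases Btri I b (some a) (some c) with h2 | h2 | h2
    · exact (h1 h2).elim
    · exact absurd (Option.some_inj.mp h2 ▸ hc) hMa
    · exact h2
  have hsub : ∀ c, M.toFun c = some b → μf c = some b := by
    intro c hc
    by_cases hcY : M'.toFun c = some b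
    · exact hboth c hc hcY
    · have hnp : ¬ I.prefA c (some b) (M'.toFun c) := by
        intro hp
        exact hM'.1 ⟨c, b, hp, some a', Or.inl ⟨a', rfl, ha'⟩, Bt I (hdom c hc) hab⟩
      rcases Atri I c (M'.toFun c) (some b) with h2 | h2 | h2
      · exact hmin c hc h2
      · exact (hcY h2).elim
      · exact (hnp h2).elim
  have hnot : a' ∉ assignedTo I M b := by
    intro h; exact ha'2 (Finset.mem_filter.mp h).2
  have hins : insert a' (assignedTo I M b) ⊆ Finset.univ.filter fun c => μf c = some b := by
    intro c hc
    rcases Finset.mem_insert.mp hc with rfl | hc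
    · exact Finset.mem_filter.mpr ⟨Finset.mem_univ _, hμa'⟩
    · exact Finset.mem_filter.mpr ⟨Finset.mem_univ _, hsub c (Finset.mem_filter.mp hc).2⟩
  have h1 : (assignedTo I M b).card + 1 ≤
      (Finset.univ.filter fun c => μf c = some b).card := by
    rw [← Finset.card_insert_of_notMem hnot]
    exact Finset.card_le_card hins
  have h2 : I.q b ≤ (assignedTo I M b).card := Nat.le_of_not_lt hfull
  omega

end LatticeAux

/-- the lattice of stable matchings. -/
theorem stmt0 (I : SchoolInstance A B) (M M' : Matching I)
    (hM : Stable I M) (hM' : Stable I M') :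
    (∃ N : Matching I,
        N.toFun = (fun a => if I.prefA a (M.toFun a) (M'.toFun a)
          then M.toFun a else M'.toFun a) ∧
        Stable I N ∧ IsJoin I M M' N) ∧
    (∃ N : Matching I,
        N.toFun = (fun a => if I.prefA a (M.toFun a) (M'.toFun a)
          then M'.toFun a else M.toFun a) ∧
        Stable I N ∧ IsMeet I M M' N) := by
  classical
  have jq : ∀ b : B, (Finset.univ.filter fun a => jf M M' a = some b).card ≤ I.q b :=
    join_quota hM hM'
  have hcS : ∀ b : B, (Finset.univ.filter fun a => jf M M' a = some b).card
      = (assignedTo I M b).card :=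
    count_eq hM hM' (jf M M') jq (jf_or M M')
  have hcS' : ∀ b : B, (Finset.univ.filter fun a => jf M M' a = some b).card
      = (assignedTo I M' b).card :=
    count_eq hM' hM (jf M M') jq (jf_or' M M')
  have mqM : ∀ b : B, (Finset.univ.filter fun a => mf M M' a = some b).card
      = (assignedTo I M b).card := by
    intro b
    have h1 := card_sum_id M M' b
    have h2 := hcS b
    have h3 := hcS' b
    omega
  have mqM' : ∀ b : B, (Finset.univ.filter fun a => mf M M' a = some b).card
      = (assignedTo I M' b).card := by
    intro b
    have h1 := card_sum_id M M' b
    have h2 := hcS b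
    omega
  have mq : ∀ b : B, (Finset.univ.filter fun a => mf M M' a = some b).card ≤ I.q b := by
    intro b
    have := mqM' b
    have h : (assignedTo I M' b).card ≤ I.q b := quota_amb M' b
    omega
  -- the join and meet matchings
  refine ⟨⟨⟨jf M M', fun b => by rw [Finset.filter_congr_decidable]; exact jq b⟩,
      rfl, ?_, ?_⟩,
    ⟨⟨mf M M', fun b => by rw [Finset.filter_congr_decidable]; exact mq b⟩, rfl, ?_, ?_⟩⟩
  case _ =>
    -- Stability of the join
    refine ⟨?_, ?_, ?_⟩
    · rintro ⟨a, b, hpa, x, hx, hbx⟩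
      have hpa' : I.prefA a (some b) (jf M M' a) := hpa
      have hb1 : I.prefA a (some b) (M.toFun a) := by
        rcases jf_or M M' a with h | ⟨_, h2⟩
        · exact h ▸ hpa'
        · exact At I hpa' h2
      have hb2 : I.prefA a (some b) (M'.toFun a) := by
        rcases jf_or' M M' a with h | ⟨_, h2⟩
        · exact h ▸ hpa'
        · exact At I hpa' h2
      rcases hx with ⟨a', rfl, hc⟩ | ⟨rfl, hs⟩
      · have hc' : jf M M' a' = some b := hc
        rcases jf_mem M M' a' with h | h
        · exact hM.1 ⟨a, b, hb1, some a', Or.inl ⟨a', rfl, h ▸ hc'⟩, hbx⟩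
        · exact hM'.1 ⟨a, b, hb2, some a', Or.inl ⟨a', rfl, h ▸ hc'⟩, hbx⟩
      · have hs1 : (Finset.univ.filter fun a => jf M M' a = some b).card < I.q b := hs
        have hs2 : hasSlack I M b := by
          have := hcS b; unfold hasSlack; omega
        exact hM.1 ⟨a, b, hb1, none, Or.inr ⟨rfl, hs2⟩, hbx⟩
    · rintro ⟨a, hpa⟩
      have hpa' : I.prefA a none (jf M M' a) := hpa
      rcases jf_mem M M' a with h | h
      · exact hM.2.1 ⟨a, show I.prefA a none (M.toFun a) from h ▸ hpa'⟩
      · exact hM'.2.1 ⟨a, show I.prefA a none (M'.toFun a) from h ▸ hpa'⟩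
    · rintro ⟨b, a, hab, hp⟩
      have hab' : jf M M' a = some b := hab
      rcases jf_mem M M' a with h | h
      · exact hM.2.2 ⟨b, a, h ▸ hab', hp⟩
      · exact hM'.2.2 ⟨b, a, h ▸ hab', hp⟩
  case _ =>
    -- join is the least upper bound
    refine ⟨?_, ?_, ?_, ?_⟩
    · -- stability again (IsJoin records it)
      refine ⟨?_, ?_, ?_⟩
      · rintro ⟨a, b, hpa, x, hx, hbx⟩
        have hpa' : I.prefA a (some b) (jf M M' a) := hpa
        have hb1 : I.prefA a (some b) (M.toFun a) := by
          rcases jf_or M M' a with h | ⟨_, h2⟩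
          · exact h ▸ hpa'
          · exact At I hpa' h2
        have hb2 : I.prefA a (some b) (M'.toFun a) := by
          rcases jf_or' M M' a with h | ⟨_, h2⟩
          · exact h ▸ hpa'
          · exact At I hpa' h2
        rcases hx with ⟨a', rfl, hc⟩ | ⟨rfl, hs⟩
        · have hc' : jf M M' a' = some b := hc
          rcases jf_mem M M' a' with h | h
          · exact hM.1 ⟨a, b, hb1, some a', Or.inl ⟨a', rfl, h ▸ hc'⟩, hbx⟩
          · exact hM'.1 ⟨a, b, hb2, some a', Or.inl ⟨a', rfl, h ▸ hc'⟩, hbx⟩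
        · have hs1 : (Finset.univ.filter fun a => jf M M' a = some b).card < I.q b := hs
          have hs2 : hasSlack I M b := by
            have := hcS b; unfold hasSlack; omega
          exact hM.1 ⟨a, b, hb1, none, Or.inr ⟨rfl, hs2⟩, hbx⟩
      · rintro ⟨a, hpa⟩
        have hpa' : I.prefA a none (jf M M' a) := hpa
        rcases jf_mem M M' a with h | h
        · exact hM.2.1 ⟨a, show I.prefA a none (M.toFun a) from h ▸ hpa'⟩
        · exact hM'.2.1 ⟨a, show I.prefA a none (M'.toFun a) from h ▸ hpa'⟩
      · rintro ⟨b, a, hab, hp⟩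
        have hab' : jf M M' a = some b := hab
        rcases jf_mem M M' a with h | h
        · exact hM.2.2 ⟨b, a, h ▸ hab', hp⟩
        · exact hM'.2.2 ⟨b, a, h ▸ hab', hp⟩
    · intro a
      rcases jf_or M M' a with h | ⟨_, h2⟩
      · exact Or.inl h
      · exact Or.inr h2
    · intro a
      rcases jf_or' M M' a with h | ⟨_, h2⟩
      · exact Or.inl h
      · exact Or.inr h2
    · intro P _ hPM hPM' a
      show P.toFun a = jf M M' a ∨ I.prefA a (P.toFun a) (jf M M' a)
      rcases jf_mem M M' a with h | h
      · rw [h]; exact hPM a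
      · rw [h]; exact hPM' a
  case _ =>
    -- Stability of the meet
    refine ⟨?_, ?_, ?_⟩
    · rintro ⟨a, b, hpa, x, hx, hbx⟩
      have hpa' : I.prefA a (some b) (mf M M' a) := hpa
      have hmin1 : ∀ c, M.toFun c = some b → I.prefA c (M'.toFun c) (some b) →
          mf M M' c = some b := by
        intro c hc hp
        unfold mf
        rw [if_neg, hc]
        intro h
        exact Aasym I (hc ▸ h) hp
      have hboth1 : ∀ c, M.toFun c = some b → M'.toFun c = some b → mf M M' c = some b := by
        intro c hc hc'
        rcases mf_mem M M' c with h | h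
        · exact h.trans hc
        · exact h.trans hc'
      have hmin2 : ∀ c, M'.toFun c = some b → I.prefA c (M.toFun c) (some b) →
          mf M M' c = some b := by
        intro c hc hp
        unfold mf
        rw [if_pos, hc]
        exact hc ▸ hp
      have hboth2 : ∀ c, M'.toFun c = some b → M.toFun c = some b → mf M M' c = some b :=
        fun c hc hc' => hboth1 c hc' hc
      rcases hx with ⟨a', rfl, hc⟩ | ⟨rfl, hs⟩
      · have hc' : mf M M' a' = some b := hc
        rcases mf_mem M M' a with hmem | hmem
        · have hb1 : I.prefA a (some b) (M.toFun a) := hmem ▸ hpa'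
          by_cases hX : M.toFun a' = some b
          · exact hM.1 ⟨a, b, hb1, some a', Or.inl ⟨a', rfl, hX⟩, hbx⟩
          · have hY : M'.toFun a' = some b := by
              rcases mf_mem M M' a' with h | h
              · exact absurd (h ▸ hc') hX
              · exact h ▸ hc'
            exact meet_aux hM hM' (mf M M') (mq b) hmin1 hboth1 hb1 hY hX hc' hbx
        · have hb1 : I.prefA a (some b) (M'.toFun a) := hmem ▸ hpa'
          by_cases hY : M'.toFun a' = some b
          · exact hM'.1 ⟨a, b, hb1, some a', Or.inl ⟨a', rfl, hY⟩, hbx⟩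
          · have hX : M.toFun a' = some b := by
              rcases mf_mem M M' a' with h | h
              · exact h ▸ hc'
              · exact absurd (h ▸ hc') hY
            exact meet_aux hM' hM (mf M M') (mq b) hmin2 hboth2 hb1 hX hY hc' hbx
      · have hs1 : (Finset.univ.filter fun a => mf M M' a = some b).card < I.q b := hs
        have hsM : hasSlack I M b := by
          have := mqM b; unfold hasSlack; omega
        have hsM' : hasSlack I M' b := by
          have := mqM' b; unfold hasSlack; omega
        rcases mf_mem M M' a with hmem | hmem
        · exact hM.1 ⟨a, b, hmem ▸ hpa', none, Or.inr ⟨rfl, hsM⟩, hbx⟩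
        · exact hM'.1 ⟨a, b, hmem ▸ hpa', none, Or.inr ⟨rfl, hsM'⟩, hbx⟩
    · rintro ⟨a, hpa⟩
      have hpa' : I.prefA a none (mf M M' a) := hpa
      rcases mf_mem M M' a with h | h
      · exact hM.2.1 ⟨a, show I.prefA a none (M.toFun a) from h ▸ hpa'⟩
      · exact hM'.2.1 ⟨a, show I.prefA a none (M'.toFun a) from h ▸ hpa'⟩
    · rintro ⟨b, a, hab, hp⟩
      have hab' : mf M M' a = some b := hab
      rcases mf_mem M M' a with h | h
      · exact hM.2.2 ⟨b, a, h ▸ hab', hp⟩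
      · exact hM'.2.2 ⟨b, a, h ▸ hab', hp⟩
  case _ =>
    -- meet is the greatest lower bound
    refine ⟨?_, ?_, ?_, ?_⟩
    · -- stability again (IsMeet records it)
      refine ⟨?_, ?_, ?_⟩
      · rintro ⟨a, b, hpa, x, hx, hbx⟩
        have hpa' : I.prefA a (some b) (mf M M' a) := hpa
        have hmin1 : ∀ c, M.toFun c = some b → I.prefA c (M'.toFun c) (some b) →
            mf M M' c = some b := by
          intro c hc hp
          unfold mf
          rw [if_neg, hc]
          intro h
          exact Aasym I (hc ▸ h) hp
        have hboth1 : ∀ c, M.toFun c = some b → M'.toFun c = some b → mf M M' c = some b := by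
          intro c hc hc'
          rcases mf_mem M M' c with h | h
          · exact h.trans hc
          · exact h.trans hc'
        have hmin2 : ∀ c, M'.toFun c = some b → I.prefA c (M.toFun c) (some b) →
            mf M M' c = some b := by
          intro c hc hp
          unfold mf
          rw [if_pos, hc]
          exact hc ▸ hp
        have hboth2 : ∀ c, M'.toFun c = some b → M.toFun c = some b → mf M M' c = some b :=
          fun c hc hc' => hboth1 c hc' hc
        rcases hx with ⟨a', rfl, hc⟩ | ⟨rfl, hs⟩
        · have hc' : mf M M' a' = some b := hc
          rcases mf_mem M M' a with hmem | hmem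
          · have hb1 : I.prefA a (some b) (M.toFun a) := hmem ▸ hpa'
            by_cases hX : M.toFun a' = some b
            · exact hM.1 ⟨a, b, hb1, some a', Or.inl ⟨a', rfl, hX⟩, hbx⟩
            · have hY : M'.toFun a' = some b := by
                rcases mf_mem M M' a' with h | h
                · exact absurd (h ▸ hc') hX
                · exact h ▸ hc'
              exact meet_aux hM hM' (mf M M') (mq b) hmin1 hboth1 hb1 hY hX hc' hbx
          · have hb1 : I.prefA a (some b) (M'.toFun a) := hmem ▸ hpa'
            by_cases hY : M'.toFun a' = some b
            · exact hM'.1 ⟨a, b, hb1, some a', Or.inl ⟨a', rfl, hY⟩, hbx⟩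
            · have hX : M.toFun a' = some b := by
                rcases mf_mem M M' a' with h | h
                · exact h ▸ hc'
                · exact absurd (h ▸ hc') hY
              exact meet_aux hM' hM (mf M M') (mq b) hmin2 hboth2 hb1 hX hY hc' hbx
        · have hs1 : (Finset.univ.filter fun a => mf M M' a = some b).card < I.q b := hs
          have hsM : hasSlack I M b := by
            have := mqM b; unfold hasSlack; omega
          have hsM' : hasSlack I M' b := by
            have := mqM' b; unfold hasSlack; omega
          rcases mf_mem M M' a with hmem | hmem
          · exact hM.1 ⟨a, b, hmem ▸ hpa', none, Or.inr ⟨rfl, hsM⟩, hbx⟩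
          · exact hM'.1 ⟨a, b, hmem ▸ hpa', none, Or.inr ⟨rfl, hsM'⟩, hbx⟩
      · rintro ⟨a, hpa⟩
        have hpa' : I.prefA a none (mf M M' a) := hpa
        rcases mf_mem M M' a with h | h
        · exact hM.2.1 ⟨a, show I.prefA a none (M.toFun a) from h ▸ hpa'⟩
        · exact hM'.2.1 ⟨a, show I.prefA a none (M'.toFun a) from h ▸ hpa'⟩
      · rintro ⟨b, a, hab, hp⟩
        have hab' : mf M M' a = some b := hab
        rcases mf_mem M M' a with h | h
        · exact hM.2.2 ⟨b, a, h ▸ hab', hp⟩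
        · exact hM'.2.2 ⟨b, a, h ▸ hab', hp⟩
    · intro a
      exact mf_le M M' a
    · intro a
      exact mf_le' M M' a
    · intro P _ hMP hM'P a
      show mf M M' a = P.toFun a ∨ I.prefA a (mf M M' a) (P.toFun a)
      rcases mf_mem M M' a with h | h
      · rw [h]; exact hMP a
      · rw [h]; exact hM'P a

end SM
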